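/- Let 𝒳, 𝒴 be nonempty finite alphabets with |𝒴| ≥ 2, let η ∈ (0, 1/(2|𝒴|)) and κ ∈ (0,2]. Let W and Ŵ be discrete memoryless channels from 𝒳 to 𝒴 such that d_TV(Ŵ(·|x), W(·|x)) ≤ κ for every x ∈ 𝒳. Then the capacities (in dual minimax form) satisfy |C(Ŵ) − C(W)| ≤ 4η|𝒴| + (κ/2)·log(2e|𝒴|/(η²κ)). -/

import Mathlib

/-- A probability distribution on a finite alphabet. -/
def IsDist {𝒴 : Type*} [Fintype 𝒴] (P : 𝒴 → ℝ) : Prop :=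
  (∀ y, 0 ≤ P y) ∧ ∑ y, P y = 1

/-- Total variation distance (unnormalized ℓ₁ distance, valued in [0,2]). -/
noncomputable def dTV {𝒴 : Type*} [Fintype 𝒴] (P Q : 𝒴 → ℝ) : ℝ :=
  ∑ y, |P y - Q y|

/-- The Kullback–Leibler divergence, valued in `EReal`: it equals the real sum
`∑ y, P y * log (P y / Q y)` (with the convention `0 · log (0/q) = 0`) when
`P ≪ Q`, and `+∞` if `P y > 0 = Q y` for some `y`. -/
noncomputable def klE {𝒴 : Type*} [Fintype 𝒴] (P Q : 𝒴 → ℝ) : EReal :=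
  if ∀ y, Q y = 0 → P y = 0 then ((∑ y, P y * Real.log (P y / Q y) : ℝ) : EReal) else ⊤

/-- The capacity of a DMC in the Csiszár–Kemperman dual (minimax) form:
`C(W) = min_{Q ∈ 𝒫(𝒴)} max_{x ∈ 𝒳} D(W(·|x) ‖ Q)`; it is a finite real number
for any channel, recovered via `EReal.toReal`. -/
noncomputable def capE {𝒳 𝒴 : Type*} [Fintype 𝒳] [Fintype 𝒴] (W : 𝒳 → 𝒴 → ℝ) : EReal :=
  ⨅ (Q : 𝒴 → ℝ) (_ : IsDist Q), ⨆ x : 𝒳, klE (W x) Q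

/-- Real-valued capacity. -/
noncomputable def capR {𝒳 𝒴 : Type*} [Fintype 𝒳] [Fintype 𝒴] (W : 𝒳 → 𝒴 → ℝ) : ℝ :=
  (capE W).toReal

namespace Stmt6Aux

/-- Real-valued KL sum. -/
noncomputable def rkl {𝒴 : Type*} [Fintype 𝒴] (P Q : 𝒴 → ℝ) : ℝ :=
  ∑ y, P y * Real.log (P y / Q y)

lemma lem_pt {p q : ℝ} (hp : 0 ≤ p) (hq : 0 ≤ q) (h : q = 0 → p = 0) :
    p - q ≤ p * Real.log (p / q) := by
  rcases eq_or_lt_of_le hp with h0 | h0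
  · simp [← h0]; linarith
  · have hq0 : 0 < q := by
      rcases eq_or_lt_of_le hq with h1 | h1
      · exact absurd (h h1.symm) (by linarith)
      · exact h1
    have h1 : Real.log (q / p) ≤ q / p - 1 := Real.log_le_sub_one_of_pos (by positivity)
    have h2 : Real.log (p / q) = - Real.log (q / p) := by
      rw [← Real.log_inv]; congr 1; field_simp
    have h3 : 1 - q / p ≤ Real.log (p / q) := by rw [h2]; linarith
    have h4 : p * (1 - q / p) = p - q := by field_simp
    nlinarith

lemma dist_le_one {𝒴 : Type*} [Fintype 𝒴] {P : 𝒴 → ℝ} (hP : IsDist P) (y : 𝒴) : P y ≤ 1 := by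
  have := Finset.single_le_sum (f := P) (fun i _ => hP.1 i) (Finset.mem_univ y)
  rw [hP.2] at this; exact this

lemma rkl_nonneg {𝒴 : Type*} [Fintype 𝒴] {P Q : 𝒴 → ℝ} (hP : IsDist P) (hQ : IsDist Q)
    (hac : ∀ y, Q y = 0 → P y = 0) : 0 ≤ rkl P Q := by
  have h : ∑ y, (P y - Q y) ≤ rkl P Q :=
    Finset.sum_le_sum (fun y _ => lem_pt (hP.1 y) (hQ.1 y) (hac y))
  rw [Finset.sum_sub_distrib, hP.2, hQ.2] at h
  linarith

lemma klE_eq {𝒴 : Type*} [Fintype 𝒴] {P Q : 𝒴 → ℝ} (hac : ∀ y, Q y = 0 → P y = 0) :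
    klE P Q = ((rkl P Q : ℝ) : EReal) := by rw [klE, if_pos hac]; rfl

lemma klE_nonneg {𝒴 : Type*} [Fintype 𝒴] {P Q : 𝒴 → ℝ} (hP : IsDist P) (hQ : IsDist Q) :
    (0 : EReal) ≤ klE P Q := by
  rw [klE]; split
  · exact_mod_cast rkl_nonneg hP hQ (by assumption)
  · exact le_top

lemma capE_nonneg {𝒳 𝒴 : Type*} [Fintype 𝒳] [Nonempty 𝒳] [Fintype 𝒴] {W : 𝒳 → 𝒴 → ℝ}
    (hW : ∀ x, IsDist (W x)) : (0 : EReal) ≤ capE W := by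
  refine le_iInf fun Q => le_iInf fun hQ => ?_
  obtain ⟨x⟩ := ‹Nonempty 𝒳›
  exact le_trans (klE_nonneg (hW x) hQ) (le_iSup (fun x => klE (W x) Q) x)

lemma capE_le_log {𝒳 𝒴 : Type*} [Fintype 𝒳] [Fintype 𝒴] [Nonempty 𝒴] {W : 𝒳 → 𝒴 → ℝ}
    (hW : ∀ x, IsDist (W x)) :
    capE W ≤ ((Real.log (Fintype.card 𝒴) : ℝ) : EReal) := by
  have hn : (0 : ℝ) < Fintype.card 𝒴 := by exact_mod_cast Fintype.card_pos
  set U : 𝒴 → ℝ := fun _ => (Fintype.card 𝒴 : ℝ)⁻¹ with hU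
  have hUdist : IsDist U := by
    constructor
    · intro y; positivity
    · rw [hU]
      rw [Finset.sum_const, Finset.card_univ, nsmul_eq_mul]
      field_simp
  refine le_trans (iInf₂_le U hUdist) (iSup_le fun x => ?_)
  rw [klE_eq (fun y hy => absurd hy (by positivity))]
  rw [EReal.coe_le_coe_iff]
  have : rkl (W x) U ≤ ∑ y : 𝒴, W x y * Real.log (Fintype.card 𝒴) := by
    refine Finset.sum_le_sum fun y _ => ?_
    rcases eq_or_lt_of_le ((hW x).1 y) with h0 | h0
    · simp [← h0]
    · have h1 : W x y / U y = W x y * Fintype.card 𝒴 := by rw [hU]; field_simp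
      rw [h1, Real.log_mul (ne_of_gt h0) (ne_of_gt hn)]
      have : Real.log (W x y) ≤ 0 := Real.log_nonpos (le_of_lt h0) (dist_le_one (hW x) y)
      nlinarith
  calc rkl (W x) U ≤ ∑ y : 𝒴, W x y * Real.log (Fintype.card 𝒴) := this
    _ = Real.log (Fintype.card 𝒴) := by rw [← Finset.sum_mul, (hW x).2, one_mul]

lemma g1 {p d : ℝ} (hp : 0 ≤ p) (hd : 0 ≤ d) (h1 : p + d ≤ 1) :
    (p + d) * Real.log (p + d) - p * Real.log p ≤ d := by
  rcases eq_or_lt_of_le hp with h0 | h0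
  · rcases eq_or_lt_of_le hd with hd0 | hd0
    · simp [← h0, ← hd0]
    · have : Real.log d ≤ 0 := Real.log_nonpos hd (by linarith)
      rw [← h0]
      simp only [zero_add, Real.log_zero, zero_mul, sub_zero]
      nlinarith
  · have hpd : 0 < p + d := by linarith
    have hl1 : Real.log (p + d) ≤ 0 := Real.log_nonpos (le_of_lt hpd) h1
    have hl2 : Real.log ((p + d) / p) ≤ (p + d) / p - 1 :=
      Real.log_le_sub_one_of_pos (by positivity)
    have hl3 : Real.log ((p + d) / p) = Real.log (p + d) - Real.log p :=
      Real.log_div (ne_of_gt hpd) (ne_of_gt h0)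
    have hl4 : (p + d) / p - 1 = d / p := by field_simp; ring
    have hl5 : Real.log (p + d) - Real.log p ≤ d / p := by rw [← hl3, ← hl4]; exact hl2
    have hl6 : p * (Real.log (p + d) - Real.log p) ≤ d := by
      have := mul_le_mul_of_nonneg_left hl5 (le_of_lt h0)
      rwa [mul_div_cancel₀ d (ne_of_gt h0)] at this
    nlinarith

lemma g2 {q d : ℝ} (hq : 0 ≤ q) (hd : 0 ≤ d) :
    q * Real.log q - (q + d) * Real.log (q + d) ≤ -(d * Real.log d) := by
  rcases eq_or_lt_of_le hq with h0 | h0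
  · simp [← h0]
  rcases eq_or_lt_of_le hd with hd0 | hd0
  · simp [← hd0]
  have hpd : 0 < q + d := by linarith
  have l1 : Real.log q ≤ Real.log (q + d) := Real.log_le_log h0 (by linarith)
  have l2 : Real.log d ≤ Real.log (q + d) := Real.log_le_log hd0 (by linarith)
  nlinarith

lemma per_y {p ph : ℝ} (hp0 : 0 ≤ p) (hp1 : p ≤ 1) (hph0 : 0 ≤ ph) (hph1 : ph ≤ 1) :
    ph * Real.log ph - p * Real.log p ≤
      max (ph - p) 0 - max (p - ph) 0 * Real.log (max (p - ph) 0) := by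
  rcases le_total p ph with h | h
  · have e1 : max (p - ph) 0 = 0 := max_eq_right (by linarith)
    have e2 : max (ph - p) 0 = ph - p := max_eq_left (by linarith)
    rw [e1, e2]
    have := g1 hp0 (by linarith : (0:ℝ) ≤ ph - p) (by linarith : p + (ph - p) ≤ 1)
    simp only [Real.log_zero, zero_mul, mul_zero, sub_zero]
    have h3 : p + (ph - p) = ph := by ring
    rw [h3] at this; linarith
  · have e1 : max (ph - p) 0 = 0 := max_eq_right (by linarith)
    have e2 : max (p - ph) 0 = p - ph := max_eq_left (by linarith)
    rw [e1, e2]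
    have := g2 hph0 (by linarith : (0:ℝ) ≤ p - ph)
    have h3 : ph + (p - ph) = p := by ring
    rw [h3] at this; linarith

lemma rkl_expand {𝒴 : Type*} [Fintype 𝒴] {R Q : 𝒴 → ℝ} (hR : ∀ y, 0 ≤ R y)
    (hQ : ∀ y, 0 < Q y) :
    rkl R Q = ∑ y, R y * Real.log (R y) - ∑ y, R y * Real.log (Q y) := by
  rw [← Finset.sum_sub_distrib]
  refine Finset.sum_congr rfl fun y _ => ?_
  rcases eq_or_lt_of_le (hR y) with h0 | h0
  · simp [← h0]
  · rw [Real.log_div (ne_of_gt h0) (ne_of_gt (hQ y))]; ring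

lemma kl_perturb {𝒴 : Type*} [Fintype 𝒴] {P Ph Q : 𝒴 → ℝ} {η κ : ℝ}
    (hn2 : 2 ≤ Fintype.card 𝒴)
    (hη0 : 0 < η) (hη1 : η ≤ 1)
    (hκ0 : 0 < κ) (hκ2 : κ ≤ 2)
    (hP : IsDist P) (hPh : IsDist Ph)
    (hTV : ∑ y, |Ph y - P y| ≤ κ)
    (hQd : IsDist Q) (hQη : ∀ y, η ≤ Q y) :
    rkl Ph Q ≤ rkl P Q +
      κ / 2 * Real.log (2 * Real.exp 1 * Fintype.card 𝒴 / (η ^ 2 * κ)) := by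
  set n : ℕ := Fintype.card 𝒴 with hn
  have hnR : (2 : ℝ) ≤ (n : ℝ) := by exact_mod_cast hn2
  have hn0 : (0 : ℝ) < (n : ℝ) := by linarith
  set c : ℝ := κ / 2 with hc
  have hc0 : 0 < c := by positivity
  have hc1 : c ≤ 1 := by rw [hc]; linarith
  have hQpos : ∀ y, 0 < Q y := fun y => lt_of_lt_of_le hη0 (hQη y)
  set A : 𝒴 → ℝ := fun y => max (Ph y - P y) 0 with hA
  set B : 𝒴 → ℝ := fun y => max (P y - Ph y) 0 with hB
  have hAnn : ∀ y, 0 ≤ A y := fun y => le_max_right _ _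
  have hBnn : ∀ y, 0 ≤ B y := fun y => le_max_right _ _
  have hABsum : ∀ y, A y + B y = |Ph y - P y| := by
    intro y
    rcases le_total (P y) (Ph y) with h | h
    · rw [hA, hB]; simp only
      rw [max_eq_left (by linarith), max_eq_right (by linarith), abs_of_nonneg (by linarith)]
      ring
    · rw [hA, hB]; simp only
      rw [max_eq_right (by linarith), max_eq_left (by linarith), abs_of_nonpos (by linarith)]
      ring
  have hABdiff : ∀ y, A y - B y = Ph y - P y := by
    intro y
    rcases le_total (P y) (Ph y) with h | h
    · rw [hA, hB]; simp only
      rw [max_eq_left (by linarith), max_eq_right (by linarith)]; ring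
    · rw [hA, hB]; simp only
      rw [max_eq_right (by linarith), max_eq_left (by linarith)]; ring
  set T : ℝ := ∑ y, A y with hT
  have hTB : ∑ y, B y = T := by
    have h1 : ∑ y, (A y - B y) = 0 := by
      rw [Finset.sum_congr rfl (fun y _ => hABdiff y), Finset.sum_sub_distrib, hPh.2, hP.2]
      ring
    rw [Finset.sum_sub_distrib] at h1
    rw [hT]; linarith
  have hTnn : 0 ≤ T := Finset.sum_nonneg fun y _ => hAnn y
  have hTc : T ≤ c := by
    have h1 : ∑ y, (A y + B y) ≤ κ := by
      rw [Finset.sum_congr rfl (fun y _ => hABsum y)]; exact hTV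
    rw [Finset.sum_add_distrib, hTB] at h1
    rw [hc]; linarith
  -- entropy part
  have hEnt : ∑ y, Ph y * Real.log (Ph y) - ∑ y, P y * Real.log (P y) ≤
      c + T * Real.log ((n : ℝ) / c) := by
    have s1 : ∑ y, (Ph y * Real.log (Ph y) - P y * Real.log (P y)) ≤
        ∑ y, (A y - B y * Real.log (B y)) := by
      refine Finset.sum_le_sum fun y _ => ?_
      exact per_y (hP.1 y) (dist_le_one hP y) (hPh.1 y) (dist_le_one hPh y)
    have s2 : ∑ y, (B y - c / n) ≤ ∑ y, (B y * Real.log (B y) + B y * Real.log ((n:ℝ)/c)) := by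
      refine Finset.sum_le_sum fun y _ => ?_
      have := lem_pt (hBnn y) (le_of_lt (by positivity : (0:ℝ) < c / n))
        (fun h => absurd h (ne_of_gt (by positivity)))
      calc B y - c / n ≤ B y * Real.log (B y / (c / n)) := this
        _ = B y * Real.log (B y) + B y * Real.log ((n:ℝ)/c) := by
            rcases eq_or_lt_of_le (hBnn y) with h0 | h0
            · simp [← h0]
            · rw [div_div_eq_mul_div, mul_div_assoc, Real.log_mul (ne_of_gt h0)
                (ne_of_gt (by positivity)), mul_add]
    rw [Finset.sum_sub_distrib, Finset.sum_const, Finset.card_univ, ← hn, nsmul_eq_mul,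
      Finset.sum_add_distrib, ← Finset.sum_mul, hTB] at s2
    have hcn : (n : ℝ) * (c / n) = c := by field_simp
    rw [hcn] at s2
    rw [← Finset.sum_sub_distrib]
    calc ∑ y, (Ph y * Real.log (Ph y) - P y * Real.log (P y))
        ≤ ∑ y, (A y - B y * Real.log (B y)) := s1
      _ = T - ∑ y, B y * Real.log (B y) := by rw [Finset.sum_sub_distrib, ← hT]
      _ ≤ T + (c - T + T * Real.log ((n:ℝ)/c)) := by linarith
      _ = c + T * Real.log ((n : ℝ) / c) := by ring
  -- log Q part
  have hLogQ : ∑ y, (P y - Ph y) * Real.log (Q y) ≤ T * (-Real.log η) := by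
    have key : ∀ y, (P y - Ph y) * Real.log (Q y) ≤ A y * (-Real.log η) := by
      intro y
      have hlη : Real.log η ≤ Real.log (Q y) := Real.log_le_log hη0 (hQη y)
      have hlq0 : Real.log (Q y) ≤ 0 := Real.log_nonpos (le_of_lt (hQpos y)) (dist_le_one hQd y)
      rcases le_total (P y) (Ph y) with h | h
      · have hAy : A y = Ph y - P y := max_eq_left (by linarith)
        rw [hAy]
        have h1 : P y - Ph y = -(Ph y - P y) := by ring
        rw [h1, neg_mul]
        have : (Ph y - P y) * Real.log η ≤ (Ph y - P y) * Real.log (Q y) :=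
          mul_le_mul_of_nonneg_left hlη (by linarith)
        linarith [this]
      · have hAy : A y = 0 := max_eq_right (by linarith)
        rw [hAy, zero_mul]
        exact mul_nonpos_of_nonneg_of_nonpos (by linarith) hlq0
    calc ∑ y, (P y - Ph y) * Real.log (Q y) ≤ ∑ y, A y * (-Real.log η) :=
          Finset.sum_le_sum fun y _ => key y
      _ = T * (-Real.log η) := by rw [← Finset.sum_mul]
  -- combine
  have e1 : rkl Ph Q = ∑ y, Ph y * Real.log (Ph y) - ∑ y, Ph y * Real.log (Q y) :=
    rkl_expand hPh.1 hQpos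
  have e2 : rkl P Q = ∑ y, P y * Real.log (P y) - ∑ y, P y * Real.log (Q y) :=
    rkl_expand hP.1 hQpos
  have hdiff : rkl Ph Q - rkl P Q ≤ c + T * Real.log ((n:ℝ)/c) + T * (-Real.log η) := by
    have h3 : ∑ y, (P y - Ph y) * Real.log (Q y) =
        ∑ y, P y * Real.log (Q y) - ∑ y, Ph y * Real.log (Q y) := by
      rw [← Finset.sum_sub_distrib]
      exact Finset.sum_congr rfl fun y _ => by ring
    rw [h3] at hLogQ
    rw [e1, e2]; linarith
  have hlogn : 0 ≤ Real.log ((n:ℝ)/c) := Real.log_nonneg (by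
    rw [le_div_iff₀ hc0]; nlinarith)
  have hlogη : 0 ≤ -Real.log η := by
    have := Real.log_nonpos (le_of_lt hη0) hη1
    linarith
  have hfin : c + T * Real.log ((n:ℝ)/c) + T * (-Real.log η) ≤
      c * Real.log (2 * Real.exp 1 * (n:ℝ) / (η ^ 2 * κ)) := by
    have hb1 : T * Real.log ((n:ℝ)/c) ≤ c * Real.log ((n:ℝ)/c) :=
      mul_le_mul_of_nonneg_right hTc hlogn
    have hb2 : T * (-Real.log η) ≤ c * (-Real.log η) :=
      mul_le_mul_of_nonneg_right hTc hlogη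
    have hrw : Real.log (2 * Real.exp 1 * (n:ℝ) / (η ^ 2 * κ)) =
        1 + Real.log ((n:ℝ)/c) + (-Real.log η) + (-Real.log η) := by
      rw [Real.log_div (by positivity) (by positivity),
        Real.log_mul (by positivity) (ne_of_gt hn0),
        Real.log_mul (by norm_num) (Real.exp_ne_zero 1),
        Real.log_exp, Real.log_mul (by positivity) (ne_of_gt hκ0),
        Real.log_pow, Real.log_div (ne_of_gt hn0) (ne_of_gt hc0), hc,
        Real.log_div (ne_of_gt hκ0) (by norm_num)]
      push_cast
      ring
    rw [hrw]
    nlinarith [mul_nonneg (le_of_lt hc0) hlogη]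
  linarith

lemma smooth {𝒴 : Type*} [Fintype 𝒴] {P Q : 𝒴 → ℝ} {η t : ℝ}
    (hη0 : 0 < η) (ht0 : 0 < t) (ht2 : t < 1 / 2)
    (hP : IsDist P) (hQnn : ∀ y, 0 ≤ Q y) (hac : ∀ y, Q y = 0 → P y = 0) :
    rkl P (fun y => (1 - t) * Q y + η) ≤ rkl P Q + 2 * t := by
  set L : ℝ := Real.log (1 / (1 - t)) with hL
  have h1t : (0:ℝ) < 1 - t := by linarith
  have hL2 : L ≤ 2 * t := by
    have := Real.log_le_sub_one_of_pos (show (0:ℝ) < 1 / (1-t) by positivity)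
    have he : 1 / (1 - t) - 1 = t / (1 - t) := by field_simp; ring
    have hd : t / (1 - t) ≤ 2 * t := by
      rw [div_le_iff₀ h1t]; nlinarith
    rw [hL]; linarith
  have key : ∀ y, P y * Real.log (P y / ((1 - t) * Q y + η)) ≤
      P y * Real.log (P y / Q y) + P y * L := by
    intro y
    rcases eq_or_lt_of_le (hP.1 y) with h0 | h0
    · simp [← h0]
    · have hq0 : 0 < Q y := by
        rcases eq_or_lt_of_le (hQnn y) with h1 | h1
        · exact absurd (hac y h1.symm) (ne_of_gt h0)
        · exact h1
      have hq'0 : 0 < (1 - t) * Q y + η := by positivity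
      have hge : (1 - t) * Q y ≤ (1 - t) * Q y + η := by linarith
      have step : Real.log (P y / ((1 - t) * Q y + η)) ≤
          Real.log (P y / ((1 - t) * Q y)) := by
        apply Real.log_le_log (by positivity)
        exact div_le_div_of_nonneg_left (le_of_lt h0) (by positivity) hge
      have expand : Real.log (P y / ((1 - t) * Q y)) = Real.log (P y / Q y) + L := by
        rw [hL]
        rw [show P y / ((1 - t) * Q y) = (P y / Q y) * (1 / (1 - t)) by
          rw [div_mul_div_comm, mul_one, mul_comm (1-t) (Q y)]]
        rw [Real.log_mul (by positivity) (by positivity)]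
      have := step.trans_eq expand
      nlinarith
  calc rkl P (fun y => (1 - t) * Q y + η) ≤ ∑ y, (P y * Real.log (P y / Q y) + P y * L) :=
        Finset.sum_le_sum fun y _ => key y
    _ = rkl P Q + L := by
        rw [Finset.sum_add_distrib, ← Finset.sum_mul, hP.2, one_mul, rkl]
    _ ≤ rkl P Q + 2 * t := by linarith

lemma side {𝒳 𝒴 : Type*} [Fintype 𝒳] [Nonempty 𝒳] [Fintype 𝒴]
    (h𝒴 : 2 ≤ Fintype.card 𝒴)
    (η κ : ℝ) (hη0 : 0 < η) (hη1 : η < 1 / (2 * Fintype.card 𝒴))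
    (hκ0 : 0 < κ) (hκ2 : κ ≤ 2)
    (W What : 𝒳 → 𝒴 → ℝ) (hW : ∀ x, IsDist (W x)) (hWhat : ∀ x, IsDist (What x))
    (hTV : ∀ x, dTV (What x) (W x) ≤ κ) :
    capR What ≤ capR W +
      (4 * η * Fintype.card 𝒴 +
        κ / 2 * Real.log (2 * Real.exp 1 * Fintype.card 𝒴 / (η ^ 2 * κ))) := by
  have : Nonempty 𝒴 := Fintype.card_pos_iff.mp (by omega)
  set n : ℕ := Fintype.card 𝒴 with hn
  have hnR : (2 : ℝ) ≤ (n : ℝ) := by exact_mod_cast h𝒴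
  have hn0 : (0 : ℝ) < (n : ℝ) := by linarith
  set t : ℝ := η * n with htdef
  have ht0 : 0 < t := by positivity
  have ht2 : t < 1 / 2 := by
    have h1 : η * (2 * n) < 1 := by
      have := (lt_div_iff₀ (by positivity : (0:ℝ) < 2 * n)).mp hη1
      linarith [this]
    rw [htdef]; nlinarith
  have hηle1 : η ≤ 1 := by nlinarith
  set E : ℝ := κ / 2 * Real.log (2 * Real.exp 1 * (n:ℝ) / (η ^ 2 * κ)) with hE
  -- finiteness facts
  have hWb : (0 : EReal) ≤ capE W := capE_nonneg hW
  have hWt : capE W ≤ ((Real.log n : ℝ) : EReal) := capE_le_log hW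
  have hWnb : capE W ≠ ⊥ := fun h => by rw [h] at hWb; exact absurd hWb (by simp)
  have hWnt : capE W ≠ ⊤ := ne_top_of_le_ne_top (EReal.coe_ne_top _) hWt
  have hHb : (0 : EReal) ≤ capE What := capE_nonneg hWhat
  have hHnb : capE What ≠ ⊥ := fun h => by rw [h] at hHb; exact absurd hHb (by simp)
  set a : ℝ := capR W with ha
  have haE : ((a : ℝ) : EReal) = capE W := by
    rw [ha, capR]; exact EReal.coe_toReal hWnt hWnb
  refine le_of_forall_pos_le_add fun ε hε => ?_
  have hlt : capE W < ((a + ε : ℝ) : EReal) := by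
    rw [← haE, EReal.coe_lt_coe_iff]; linarith
  rw [capE] at hlt
  obtain ⟨Q, hQlt⟩ := iInf_lt_iff.mp hlt
  obtain ⟨hQd, hQlt⟩ := iInf_lt_iff.mp hQlt
  have hx : ∀ x, klE (W x) Q < ((a + ε : ℝ) : EReal) :=
    fun x => lt_of_le_of_lt (le_iSup (fun x => klE (W x) Q) x) hQlt
  have hac : ∀ x, ∀ y, Q y = 0 → W x y = 0 := by
    intro x
    by_contra h
    have h2 := hx x
    rw [klE, if_neg h] at h2
    exact absurd h2 (not_lt.mpr le_top)
  have hrklW : ∀ x, rkl (W x) Q < a + ε := by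
    intro x
    have h2 := hx x
    rw [klE_eq (hac x), EReal.coe_lt_coe_iff] at h2
    exact h2
  set Q' : 𝒴 → ℝ := fun y => (1 - t) * Q y + η with hQ'
  have hQ'η : ∀ y, η ≤ Q' y := by
    intro y
    have : 0 ≤ (1 - t) * Q y := mul_nonneg (by linarith) (hQd.1 y)
    rw [hQ']; simp only; linarith
  have hQ'd : IsDist Q' := by
    constructor
    · intro y; linarith [hQ'η y]
    · rw [hQ']; simp only
      rw [Finset.sum_add_distrib, ← Finset.mul_sum, hQd.2, Finset.sum_const,
        Finset.card_univ, ← hn, nsmul_eq_mul]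
      rw [htdef]; ring
  have hQ'pos : ∀ y, 0 < Q' y := fun y => lt_of_lt_of_le hη0 (hQ'η y)
  have hac' : ∀ (R : 𝒳 → 𝒴 → ℝ) (x : 𝒳), ∀ y, Q' y = 0 → R x y = 0 :=
    fun R x y hy => absurd hy (ne_of_gt (hQ'pos y))
  have hbound : ∀ x, rkl (What x) Q' ≤ a + ε + 2 * t + E := by
    intro x
    have h1 : rkl (What x) Q' ≤ rkl (W x) Q' + E := by
      rw [hE]
      exact kl_perturb h𝒴 hη0 hηle1 hκ0 hκ2 (hW x) (hWhat x) (hTV x) hQ'd hQ'η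
    have h2 : rkl (W x) Q' ≤ rkl (W x) Q + 2 * t :=
      smooth hη0 ht0 ht2 (hW x) hQd.1 (hac x)
    have h3 := hrklW x
    linarith
  have hcap2 : capE What ≤ ((a + ε + 2 * t + E : ℝ) : EReal) := by
    refine le_trans (iInf₂_le Q' hQ'd) (iSup_le fun x => ?_)
    rw [klE_eq (hac' What x), EReal.coe_le_coe_iff]
    exact hbound x
  have final : capR What ≤ a + ε + 2 * t + E := by
    have := EReal.toReal_le_toReal hcap2 hHnb (EReal.coe_ne_top _)
    rwa [EReal.toReal_coe] at this
  have : 2 * t ≤ 4 * η * n := by rw [htdef]; nlinarith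
  linarith

end Stmt6Aux

/-- `|C(Ŵ) − C(W)| ≤ 4η|𝒴| + (κ/2)·log(2e|𝒴|/(η²κ))` for channels
with per-input total-variation distance at most `κ` and `η ∈ (0,1/(2|𝒴|))`. -/
theorem stmt_6 {𝒳 𝒴 : Type*} [Fintype 𝒳] [Nonempty 𝒳] [Fintype 𝒴]
    (h𝒴 : 2 ≤ Fintype.card 𝒴)
    (η κ : ℝ) (hη0 : 0 < η) (hη1 : η < 1 / (2 * Fintype.card 𝒴))
    (hκ0 : 0 < κ) (hκ2 : κ ≤ 2)
    (W What : 𝒳 → 𝒴 → ℝ) (hW : ∀ x, IsDist (W x)) (hWhat : ∀ x, IsDist (What x))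
    (hTV : ∀ x, dTV (What x) (W x) ≤ κ) :
    |capR What - capR W| ≤
      4 * η * Fintype.card 𝒴 +
        κ / 2 * Real.log (2 * Real.exp 1 * Fintype.card 𝒴 / (η ^ 2 * κ)) := by
  have hTV' : ∀ x, dTV (W x) (What x) ≤ κ := by
    intro x
    have : dTV (W x) (What x) = dTV (What x) (W x) := by
      rw [dTV, dTV]
      exact Finset.sum_congr rfl fun y _ => abs_sub_comm _ _
    rw [this]; exact hTV x
  rw [abs_sub_le_iff]
  constructor
  · have := Stmt6Aux.side h𝒴 η κ hη0 hη1 hκ0 hκ2 W What hW hWhat hTV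
    linarith
  · have := Stmt6Aux.side h𝒴 η κ hη0 hη1 hκ0 hκ2 What W hWhat hW hTV'
    linarith
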